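/- arXiv:1603.01609 — 4 statements merged into one kernel-verified Lean document; each statement's English description precedes it below -/
import Mathlib

section
/- Let H be a C^{1+BV} lift of degree d ≥ 2. Then there exists a constant C₀ ≥ 0 with the following property: for every n ≥ 1 and all real a < b, if each interval (H^[i](a), H^[i](b)) for 0 ≤ i < n has length at most 1 and these intervals are pairwise disjoint modulo ℤ (i.e. for all 0 ≤ i < j < n and every integer m, the open intervals (H^[i](a), H^[i](b)) and (m + H^[j](a), m + H^[j](b)) are disjoint), then for all x, y ∈ [a, b]: log(deriv (H^[n]) x) − log(deriv (H^[n]) y) ≤ C₀. -/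
open Function Set Filter Asymptotics

/-- A `C^{1+BV}` lift of degree `d`: continuously differentiable with positive
derivative, commuting with `x ↦ x + 1` up to `d`, and with derivative of
bounded variation on `[0,1]`. -/
def IsLift (d : ℤ) (H : ℝ → ℝ) : Prop :=
  ContDiff ℝ 1 H ∧ (∀ x, 0 < deriv H x) ∧ (∀ x, H (x + 1) = H x + d) ∧
    BoundedVariationOn (deriv H) (Set.Icc 0 1)

/-- `p` is a periodic point of `H` of period `s ≥ 1` (as a circle map). -/
def IsPeriodicPtOfPeriod (H : ℝ → ℝ) (s : ℕ) (p : ℝ) : Prop :=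
  1 ≤ s ∧ ∃ m : ℤ, H^[s] p - p = m

/-- The set of parabolic points of `H`: periodic points with multiplier `1`. -/
def Par (H : ℝ → ℝ) : Set ℝ :=
  {p | ∃ s, IsPeriodicPtOfPeriod H s p ∧ deriv (H^[s]) p = 1}

/-- `H` is weakly expanding: around every periodic point (of least period `s`)
the derivative of `H^[s]` is `> 1` on a punctured neighborhood. -/
def WeaklyExpanding (H : ℝ → ℝ) : Prop :=
  ∀ p s, IsPeriodicPtOfPeriod H s p → (∀ t, IsPeriodicPtOfPeriod H t p → s ≤ t) →
    ∃ δ > 0, ∀ x, 0 < |x - p| → |x - p| < δ → 1 < deriv (H^[s]) x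

/-- `H` is metrically expanding: `deriv H > 1` off the parabolic points. -/
def MetricallyExpanding (H : ℝ → ℝ) : Prop :=
  ∀ x, x ∉ Par H → 1 < deriv H x

/-- Distance on the circle `ℝ/ℤ`. -/
noncomputable def dist1 (x y : ℝ) : ℝ := ⨅ m : ℤ, |x - y - (m : ℝ)|

/-- The open interval `(a,b)` (with `a < b`, `b - a < 1`) is a nice interval for `H`:
no iterate of an endpoint enters the interval modulo `ℤ`. -/
def NiceInterval (H : ℝ → ℝ) (a b : ℝ) : Prop :=
  a < b ∧ b - a < 1 ∧
    ∀ n : ℕ, ∀ m : ℤ,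
      H^[n] a ∉ Set.Ioo (a + m) (b + m) ∧ H^[n] b ∉ Set.Ioo (a + m) (b + m)

/-- `H^[k] x` lies in `(a,b)` modulo `ℤ`, with `k ≥ 1`. -/
def EntersAt (H : ℝ → ℝ) (a b : ℝ) (x : ℝ) (k : ℕ) : Prop :=
  1 ≤ k ∧ ∃ m : ℤ, H^[k] x ∈ Set.Ioo (a + m) (b + m)

/-- The set of points that eventually enter `(a,b)` modulo `ℤ`. -/
def DSet (H : ℝ → ℝ) (a b : ℝ) : Set ℝ := {x | ∃ k, EntersAt H a b x k}

/-- `k` is the first entry time of `x` into `(a,b)` modulo `ℤ`. -/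
def FirstEntryTime (H : ℝ → ℝ) (a b : ℝ) (x : ℝ) (k : ℕ) : Prop :=
  EntersAt H a b x k ∧ ∀ j, EntersAt H a b x j → k ≤ j


lemma aux_sum_var (g : ℝ → ℝ) (u v : ℕ → ℝ) :
    ∀ s : Finset ℕ, ∀ T : ℝ,
    (∀ i ∈ s, 0 ≤ u i) → (∀ i ∈ s, u i ≤ v i) → (∀ i ∈ s, v i ≤ T) →
    (∀ i ∈ s, ∀ j ∈ s, i ≠ j → Disjoint (Set.Ioo (u i) (v i)) (Set.Ioo (u j) (v j))) →
    ∑ i ∈ s, eVariationOn g (Set.Icc (u i) (v i)) ≤ eVariationOn g (Set.Icc 0 T) := by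
  intro s
  induction s using Finset.strongInduction with
  | _ s IH =>
    intro T h0 huv hvT hdisj
    set s' := s.filter (fun i => u i < v i) with hs'
    have hsub : s' ⊆ s := Finset.filter_subset _ _
    have hsum : ∑ i ∈ s, eVariationOn g (Set.Icc (u i) (v i))
        = ∑ i ∈ s', eVariationOn g (Set.Icc (u i) (v i)) := by
      refine (Finset.sum_subset hsub fun i hi hni => ?_).symm
      have hle := huv i hi
      have h2 : ¬ u i < v i := fun h => hni (Finset.mem_filter.mpr ⟨hi, h⟩)
      have : u i = v i := le_antisymm hle (not_lt.mp h2)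
      rw [this, Set.Icc_self]
      exact eVariationOn.subsingleton g Set.subsingleton_singleton
    rw [hsum]
    rcases s'.eq_empty_or_nonempty with he | hne
    · simp [he]
    obtain ⟨i₀, hi₀, hmax⟩ := s'.exists_max_image u hne
    have hi₀s : i₀ ∈ s := hsub hi₀
    have hlt : u i₀ < v i₀ := (Finset.mem_filter.mp hi₀).2
    have herase : ∀ j ∈ s'.erase i₀, v j ≤ u i₀ := by
      intro j hj
      have hjne : j ≠ i₀ := Finset.ne_of_mem_erase hj
      have hjs' : j ∈ s' := Finset.mem_of_mem_erase hj
      have hjs : j ∈ s := hsub hjs'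
      have hd := hdisj j hjs i₀ hi₀s hjne
      by_contra hcon
      push_neg at hcon
      have h1 : u j ≤ u i₀ := hmax j hjs'
      set pt := (u i₀ + min (v j) (v i₀)) / 2 with hpt
      have hmin : u i₀ < min (v j) (v i₀) := lt_min hcon hlt
      have hp1 : u i₀ < pt := by rw [hpt]; linarith
      have hp2 : pt < min (v j) (v i₀) := by rw [hpt]; linarith
      exact (Set.disjoint_left.mp hd
        ⟨lt_of_le_of_lt h1 hp1, lt_of_lt_of_le hp2 (min_le_left _ _)⟩)
        ⟨hp1, lt_of_lt_of_le hp2 (min_le_right _ _)⟩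
    have hss : s'.erase i₀ ⊂ s :=
      lt_of_lt_of_le (Finset.erase_ssubset hi₀) hsub
    have hIH := IH _ hss (u i₀)
      (fun j hj => h0 j (hsub (Finset.mem_of_mem_erase hj)))
      (fun j hj => huv j (hsub (Finset.mem_of_mem_erase hj)))
      herase
      (fun i hi j hj hij => hdisj i (hsub (Finset.mem_of_mem_erase hi))
        j (hsub (Finset.mem_of_mem_erase hj)) hij)
    rw [← Finset.add_sum_erase _ _ hi₀]
    have h0i : (0:ℝ) ≤ u i₀ := h0 i₀ hi₀s
    have hvTi : v i₀ ≤ T := hvT i₀ hi₀s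
    calc eVariationOn g (Set.Icc (u i₀) (v i₀)) + ∑ j ∈ s'.erase i₀,
          eVariationOn g (Set.Icc (u j) (v j))
        ≤ eVariationOn g (Set.Icc (u i₀) (v i₀)) + eVariationOn g (Set.Icc 0 (u i₀)) :=
          add_le_add_right hIH _
      _ = eVariationOn g (Set.Icc 0 (u i₀)) + eVariationOn g (Set.Icc (u i₀) (v i₀)) :=
          add_comm _ _
      _ = eVariationOn g (Set.Icc 0 (v i₀)) := by
          have := eVariationOn.Icc_add_Icc g (s := Set.univ) h0i hlt.le (Set.mem_univ (u i₀))
          simpa using this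
      _ ≤ eVariationOn g (Set.Icc 0 T) :=
          eVariationOn.mono g (Set.Icc_subset_Icc le_rfl hvTi)

lemma aux_var_shift (g : ℝ → ℝ) (hg : ∀ x, g (x + 1) = g x) (c d : ℝ) (m : ℤ) :
    eVariationOn g (Set.Icc (c + m) (d + m)) = eVariationOn g (Set.Icc c d) := by
  have hper : Function.Periodic g 1 := hg
  have hper' : ∀ x, g (x + (m : ℝ)) = g x := by
    intro x
    have := (hper.int_mul m) x
    simpa using this
  have hφ : MonotoneOn (fun x : ℝ => x + (m : ℝ)) (Set.Icc c d) :=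
    fun x _ y _ hxy => by simpa using hxy
  have himg : (fun x : ℝ => x + (m : ℝ)) '' Set.Icc c d = Set.Icc (c + m) (d + m) := by
    simp [Set.image_add_const_Icc]
  have := eVariationOn.comp_eq_of_monotoneOn g (fun x : ℝ => x + (m : ℝ)) hφ
  rw [himg] at this
  rw [← this]
  congr 1
  funext x
  exact hper' x

lemma aux_deriv_iterate (H : ℝ → ℝ) (hdiff : Differentiable ℝ H) (n : ℕ) (x : ℝ) :
    deriv (H^[n]) x = ∏ i ∈ Finset.range n, deriv H (H^[i] x) := by
  induction n with
  | zero => simp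
  | succ n ih =>
    rw [Function.iterate_succ']
    have hdn : Differentiable ℝ (H^[n]) := hdiff.iterate n
    rw [deriv_comp x (hdiff _) (hdn x), Finset.prod_range_succ, ih, mul_comm]

lemma aux_log_lip {m : ℝ} (hm : 0 < m) :
    ∀ x y : ℝ, m ≤ x → m ≤ y → |Real.log x - Real.log y| ≤ m⁻¹ * |x - y| := by
  have key : ∀ x y : ℝ, m ≤ x → m ≤ y → Real.log x - Real.log y ≤ m⁻¹ * |x - y| := by
    intro x y hx hy
    have hx0 : 0 < x := lt_of_lt_of_le hm hx
    have hy0 : 0 < y := lt_of_lt_of_le hm hy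
    have h1 : Real.log x - Real.log y = Real.log (x / y) :=
      (Real.log_div hx0.ne' hy0.ne').symm
    have h2 : Real.log (x / y) ≤ x / y - 1 := Real.log_le_sub_one_of_pos (div_pos hx0 hy0)
    have h3 : x / y - 1 = (x - y) / y := by field_simp
    have h4 : (x - y) / y ≤ |x - y| / m :=
      div_le_div₀ (abs_nonneg _) (le_abs_self _) hm hy
    have h5 : |x - y| / m = m⁻¹ * |x - y| := by rw [div_eq_inv_mul]
    linarith [h1, h2, h3.symm ▸ h2, h4, h5]
  intro x y hx hy
  rcases abs_sub_le_iff.mpr ⟨key x y hx hy, by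
    have := key y x hy hx
    rwa [abs_sub_comm] at this⟩ with h
  exact h

private theorem stmt5' (d : ℤ) (hd : 2 ≤ d) (H : ℝ → ℝ)
    (hH : ContDiff ℝ 1 H ∧ (∀ x, 0 < deriv H x) ∧ (∀ x, H (x + 1) = H x + d) ∧
      BoundedVariationOn (deriv H) (Set.Icc 0 1)) :
    ∃ C₀ : ℝ, 0 ≤ C₀ ∧
      ∀ n : ℕ, 1 ≤ n → ∀ a b : ℝ, a < b →
        (∀ i < n, H^[i] b - H^[i] a ≤ 1) →
        (∀ i j, i < j → j < n → ∀ m : ℤ,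
          Disjoint (Set.Ioo (H^[i] a) (H^[i] b))
            (Set.Ioo ((m : ℝ) + H^[j] a) ((m : ℝ) + H^[j] b))) →
        ∀ x ∈ Set.Icc a b, ∀ y ∈ Set.Icc a b,
          Real.log (deriv (H^[n]) x) - Real.log (deriv (H^[n]) y) ≤ C₀ := by
  obtain ⟨hC1, hpos, hcomm, hBV⟩ := hH
  have hdiff : Differentiable ℝ H := hC1.differentiable one_ne_zero
  have hcontd : Continuous (deriv H) := hC1.continuous_deriv le_rfl
  -- periodicity of the derivative
  have hper : ∀ x, deriv H (x + 1) = deriv H x := by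
    intro x
    have h1 : (fun y => H (y + 1)) = fun y => H y + (d : ℝ) := funext hcomm
    have h2 : deriv (fun y => H (y + 1)) x = deriv H (x + 1) :=
      deriv_comp_add_const H 1 x
    have h3 : deriv (fun y => H y + (d : ℝ)) x = deriv H x := by
      simp
    rw [h1, h3] at h2
    exact h2.symm
  set g : ℝ → ℝ := fun x => Real.log (deriv H x) with hg
  have hgper : ∀ x, g (x + 1) = g x := fun x => by simp [hg, hper x]
  -- the variation of g on [0,1] is finite
  obtain ⟨z, hz, hzmin⟩ := isCompact_Icc.exists_isMinOn (Set.nonempty_Icc.mpr zero_le_one)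
    (hcontd.continuousOn (s := Set.Icc (0:ℝ) 1))
  obtain ⟨w, hw, hwmax⟩ := isCompact_Icc.exists_isMaxOn (Set.nonempty_Icc.mpr zero_le_one)
    (hcontd.continuousOn (s := Set.Icc (0:ℝ) 1))
  set m₀ : ℝ := deriv H z with hm₀
  have hm₀pos : 0 < m₀ := hpos z
  have hmaps : Set.MapsTo (deriv H) (Set.Icc 0 1) (Set.Icc m₀ (deriv H w)) :=
    fun t ht => ⟨hzmin ht, hwmax ht⟩
  have hlip : LipschitzOnWith (Real.toNNReal m₀⁻¹) Real.log (Set.Icc m₀ (deriv H w)) := by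
    apply LipschitzOnWith.of_dist_le_mul
    intro p hp q hq
    rw [Real.dist_eq, Real.dist_eq, Real.coe_toNNReal _ (inv_nonneg.mpr hm₀pos.le)]
    exact aux_log_lip hm₀pos p q hp.1 hq.1
  have hgBV : BoundedVariationOn g (Set.Icc 0 1) := by
    have := hlip.comp_boundedVariationOn hmaps hBV
    exact this
  set V : ENNReal := eVariationOn g (Set.Icc 0 1) with hV
  have hVne : V ≠ ⊤ := hgBV
  have h2Vne : 2 * V ≠ ⊤ := ENNReal.mul_ne_top (by simp) hVne
  refine ⟨(2 * V).toReal, ENNReal.toReal_nonneg, ?_⟩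
  intro n hn a b hab hlen hdis x hx y hy
  have hmono : StrictMono H := strictMono_of_deriv_pos hpos
  set c : ℕ → ℝ := fun i => H^[i] a with hc
  set e : ℕ → ℝ := fun i => H^[i] b with he
  have hce : ∀ i, c i < e i := fun i => (hmono.iterate i) hab
  set W : ℕ → ENNReal := fun i => eVariationOn g (Set.Icc (c i) (e i)) with hW
  -- strengthened disjointness
  have hdisj2 : ∀ i < n, ∀ j < n, i ≠ j → ∀ p q : ℤ,
      Disjoint (Set.Ioo (c i + p) (e i + p)) (Set.Ioo (c j + q) (e j + q)) := by
    have key : ∀ i j, i < j → j < n → ∀ p q : ℤ,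
        Disjoint (Set.Ioo (c i + p) (e i + p)) (Set.Ioo (c j + q) (e j + q)) := by
      intro i j hij hjn p q
      rw [Set.disjoint_left]
      rintro t ⟨ht1, ht2⟩ ⟨ht3, ht4⟩
      have hmem1 : t - p ∈ Set.Ioo (c i) (e i) := ⟨by linarith, by linarith⟩
      have hmem2 : t - p ∈ Set.Ioo (((q - p : ℤ) : ℝ) + c j) (((q - p : ℤ) : ℝ) + e j) := by
        push_cast
        constructor <;> linarith
      exact (Set.disjoint_left.mp (hdis i j hij hjn (q - p)) hmem1) hmem2
    intro i hi j hj hij p q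
    rcases lt_or_gt_of_ne hij with h | h
    · exact key i j h hj p q
    · exact (key j i h hi q p).symm
  -- the splitting
  set u1 : ℕ → ℝ := fun i => c i - ⌊c i⌋ with hu1
  set dd : ℕ → ℝ := fun i => e i - ⌊c i⌋ with hdd
  set v1 : ℕ → ℝ := fun i => min (dd i) 1 with hv1
  set v2 : ℕ → ℝ := fun i => max (dd i - 1) 0 with hv2
  have hu1_mem : ∀ i, 0 ≤ u1 i ∧ u1 i < 1 := fun i =>
    ⟨by simp only [hu1]; linarith [Int.floor_le (c i)],
     by simp only [hu1]; linarith [Int.lt_floor_add_one (c i)]⟩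
  have hu1dd : ∀ i, u1 i < dd i := fun i => by
    simp only [hu1, hdd]; linarith [hce i]
  have hddle : ∀ i < n, dd i ≤ u1 i + 1 := by
    intro i hi
    have := hlen i hi
    simp only [hdd, hu1]
    have : e i - c i ≤ 1 := this
    linarith
  -- decomposition of W i
  have hWdec : ∀ i < n, W i ≤ eVariationOn g (Set.Icc (u1 i) (v1 i))
      + eVariationOn g (Set.Icc 0 (v2 i)) := by
    intro i hi
    have hshift : W i = eVariationOn g (Set.Icc (u1 i) (dd i)) := by
      have := aux_var_shift g hgper (u1 i) (dd i) ⌊c i⌋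
      have heq1 : u1 i + (⌊c i⌋ : ℝ) = c i := by simp [hu1]
      have heq2 : dd i + (⌊c i⌋ : ℝ) = e i := by simp [hdd]
      rw [heq1, heq2] at this
      exact this
    rcases le_or_gt (dd i) 1 with hcase | hcase
    · have hv1eq : v1 i = dd i := min_eq_left hcase
      have : W i = eVariationOn g (Set.Icc (u1 i) (v1 i)) := by rw [hshift, hv1eq]
      rw [this]
      exact le_add_right le_rfl
    · have hv1eq : v1 i = 1 := min_eq_right hcase.le
      have hv2eq : v2 i = dd i - 1 := max_eq_left (by linarith)
      have hsplit : eVariationOn g (Set.Icc (u1 i) 1) + eVariationOn g (Set.Icc 1 (dd i))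
          = eVariationOn g (Set.Icc (u1 i) (dd i)) := by
        have := eVariationOn.Icc_add_Icc g (s := Set.univ) (hu1_mem i).2.le hcase.le
          (Set.mem_univ (1:ℝ))
        simpa using this
      have hshift2 : eVariationOn g (Set.Icc 1 (dd i))
          = eVariationOn g (Set.Icc 0 (dd i - 1)) := by
        have := aux_var_shift g hgper 0 (dd i - 1) 1
        simpa using this
      rw [hshift, hv1eq, hv2eq, ← hsplit, hshift2]
  -- bounds for sums
  have hsum1 : ∑ i ∈ Finset.range n, eVariationOn g (Set.Icc (u1 i) (v1 i)) ≤ V := by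
    apply aux_sum_var g u1 v1 (Finset.range n) 1
    · intro i _; exact (hu1_mem i).1
    · intro i _; exact le_min (hu1dd i).le (hu1_mem i).2.le
    · intro i _; exact min_le_right _ _
    · intro i hi j hj hij
      rw [Finset.mem_range] at hi hj
      have key : ∀ k, Set.Ioo (u1 k) (v1 k) ⊆
          Set.Ioo (c k + ((-⌊c k⌋ : ℤ) : ℝ)) (e k + ((-⌊c k⌋ : ℤ) : ℝ)) := by
        intro k
        apply Set.Ioo_subset_Ioo
        · push_cast; simp only [hu1]; linarith
        · have hm : v1 k ≤ dd k := min_le_left _ _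
          simp only [hv1, hdd] at hm ⊢
          push_cast
          linarith
      exact Disjoint.mono (key i) (key j) (hdisj2 i hi j hj hij _ _)
  have hsum2 : ∑ i ∈ Finset.range n, eVariationOn g (Set.Icc 0 (v2 i)) ≤ V := by
    apply aux_sum_var g (fun _ => (0:ℝ)) v2 (Finset.range n) 1
    · intro i _; exact le_rfl
    · intro i _; exact le_max_right _ _
    · intro i hi
      rw [Finset.mem_range] at hi
      exact max_le (by linarith [hddle i hi, (hu1_mem i).2]) zero_le_one
    · intro i hi j hj hij
      rw [Finset.mem_range] at hi hj
      have hsub : ∀ k, k < n → Set.Ioo (0:ℝ) (v2 k) ⊆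
          Set.Ioo (c k + ((-⌊c k⌋ - 1 : ℤ) : ℝ)) (e k + ((-⌊c k⌋ - 1 : ℤ) : ℝ)) := by
        intro k hk
        rcases le_or_gt (dd k) 1 with hca | hca
        · have : v2 k = 0 := max_eq_right (by linarith)
          rw [this]
          simp
        · have hv2eq : v2 k = dd k - 1 := max_eq_left (by linarith)
          rw [hv2eq]
          apply Set.Ioo_subset_Ioo
          · push_cast
            have h2 := (hu1_mem k).2
            simp only [hu1] at h2
            linarith
          · push_cast
            simp only [hdd]
            linarith
      exact Disjoint.mono (hsub i hi) (hsub j hj) (hdisj2 i hi j hj hij _ _)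
  -- total variation bound
  have htot : ∑ i ∈ Finset.range n, W i ≤ 2 * V := by
    calc ∑ i ∈ Finset.range n, W i
        ≤ ∑ i ∈ Finset.range n, (eVariationOn g (Set.Icc (u1 i) (v1 i))
            + eVariationOn g (Set.Icc 0 (v2 i))) := by
          apply Finset.sum_le_sum
          intro i hi
          exact hWdec i (Finset.mem_range.mp hi)
      _ = (∑ i ∈ Finset.range n, eVariationOn g (Set.Icc (u1 i) (v1 i)))
            + ∑ i ∈ Finset.range n, eVariationOn g (Set.Icc 0 (v2 i)) :=
          Finset.sum_add_distrib
      _ ≤ V + V := add_le_add hsum1 hsum2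
      _ = 2 * V := (two_mul V).symm
  have hWfin : ∀ i ∈ Finset.range n, W i ≠ ⊤ := by
    intro i hi
    exact ne_top_of_le_ne_top h2Vne ((Finset.single_le_sum (fun j _ => zero_le) hi).trans htot)
  -- derivative of the iterate and log expansion
  have hlogsum : ∀ t : ℝ, Real.log (deriv (H^[n]) t)
      = ∑ i ∈ Finset.range n, g (H^[i] t) := by
    intro t
    rw [aux_deriv_iterate H hdiff n t, Real.log_prod]
    intro i _
    exact (hpos _).ne'
  rw [hlogsum x, hlogsum y, ← Finset.sum_sub_distrib]
  -- each term bounded by variation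
  have hterm : ∀ i ∈ Finset.range n, g (H^[i] x) - g (H^[i] y) ≤ (W i).toReal := by
    intro i hi
    have hmem : ∀ t ∈ Set.Icc a b, H^[i] t ∈ Set.Icc (c i) (e i) := by
      intro t ht
      exact ⟨(hmono.monotone.iterate i) ht.1, (hmono.monotone.iterate i) ht.2⟩
    have hx' := hmem x hx
    have hy' := hmem y hy
    have hedist := eVariationOn.edist_le g hx' hy'
    have h1 : dist (g (H^[i] x)) (g (H^[i] y)) ≤ (W i).toReal := by
      have := ENNReal.toReal_mono (hWfin i hi) hedist
      rwa [edist_dist, ENNReal.toReal_ofReal dist_nonneg] at this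
    calc g (H^[i] x) - g (H^[i] y) ≤ |g (H^[i] x) - g (H^[i] y)| := le_abs_self _
      _ = dist (g (H^[i] x)) (g (H^[i] y)) := (Real.dist_eq _ _).symm
      _ ≤ (W i).toReal := h1
  calc ∑ i ∈ Finset.range n, (g (H^[i] x) - g (H^[i] y))
      ≤ ∑ i ∈ Finset.range n, (W i).toReal := Finset.sum_le_sum hterm
    _ = (∑ i ∈ Finset.range n, W i).toReal := (ENNReal.toReal_sum hWfin).symm
    _ ≤ (2 * V).toReal := ENNReal.toReal_mono h2Vne htot

theorem stmt5 (d : ℤ) (hd : 2 ≤ d) (H : ℝ → ℝ) (hH : IsLift d H) :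
    ∃ C₀ : ℝ, 0 ≤ C₀ ∧
      ∀ n : ℕ, 1 ≤ n → ∀ a b : ℝ, a < b →
        (∀ i < n, H^[i] b - H^[i] a ≤ 1) →
        (∀ i j, i < j → j < n → ∀ m : ℤ,
          Disjoint (Set.Ioo (H^[i] a) (H^[i] b))
            (Set.Ioo ((m : ℝ) + H^[j] a) ((m : ℝ) + H^[j] b))) →
        ∀ x ∈ Set.Icc a b, ∀ y ∈ Set.Icc a b,
          Real.log (deriv (H^[n]) x) - Real.log (deriv (H^[n]) y) ≤ C₀ :=
  stmt5' d hd H hH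
end

section
/- Given ε > 0, an integer n ≥ 1, and real numbers x₁ < x₂ < ⋯ < x_n < x₁ + 1, there exists δ > 0 such that for any real numbers y₁, …, y_n with |y_j − x_j| < δ for each j, there exists a real analytic strictly increasing bijection φ : ℝ → ℝ satisfying, for all x ∈ ℝ: φ(x+1) = φ(x) + 1, |φ(x) − x| < ε, and |deriv φ x − 1| < ε, and moreover φ(x_j) = y_j for each j with 1 ≤ j ≤ n. -/
open Function Set Filter Asymptotics

lemma aux_sin_analytic : AnalyticOnNhd ℝ Real.sin Set.univ := by
  have hC : AnalyticOnNhd ℂ Complex.sin Set.univ :=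
    Complex.differentiable_sin.differentiableOn.analyticOnNhd isOpen_univ
  intro t _
  have h2 : AnalyticAt ℝ (fun s : ℝ => Complex.sin (Complex.ofRealCLM s)) t :=
    ((hC _ trivial).restrictScalars).comp (Complex.ofRealCLM.analyticAt t)
  have h3 : AnalyticAt ℝ (fun s : ℝ => Complex.reCLM (Complex.sin (Complex.ofRealCLM s))) t :=
    (Complex.reCLM.analyticAt _).comp h2
  have he : Real.sin = fun s : ℝ => Complex.reCLM (Complex.sin (Complex.ofRealCLM s)) := by
    funext s
    simp [Complex.sin_ofReal_re]
  rw [he]; exact h3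

lemma aux_S_analytic : AnalyticOnNhd ℝ (fun t : ℝ => Real.sin (Real.pi * t) ^ 2) Set.univ := by
  intro t _
  exact ((aux_sin_analytic _ trivial).comp (analyticAt_const.mul analyticAt_id)).pow 2

lemma aux_S_pos {t : ℝ} (h0 : t ≠ 0) (h1 : |t| < 1) : 0 < Real.sin (Real.pi * t) ^ 2 := by
  have hs : Real.sin (Real.pi * t) ≠ 0 := by
    intro h
    rw [Real.sin_eq_zero_iff] at h
    obtain ⟨m, hm⟩ := h
    have hπ : (Real.pi : ℝ) ≠ 0 := Real.pi_ne_zero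
    have hmt : (m : ℝ) = t := by
      apply mul_left_cancel₀ hπ
      rw [← hm]; ring
    have hm0 : m ≠ 0 := by
      intro h'
      apply h0
      rw [← hmt, h']; simp
    have h2 : (1 : ℝ) ≤ |(m : ℝ)| := by
      have := Int.one_le_abs hm0
      exact_mod_cast this
    rw [hmt] at h2
    linarith
  positivity

lemma aux_S_per (t : ℝ) : Real.sin (Real.pi * (t + 1)) ^ 2 = Real.sin (Real.pi * t) ^ 2 := by
  have : Real.pi * (t + 1) = Real.pi * t + Real.pi := by ring
  rw [this, Real.sin_add_pi, neg_sq]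

lemma aux_periodic_bound {f : ℝ → ℝ} (hc : Continuous f) (hp : ∀ t, f (t + 1) = f t) :
    ∃ M : ℝ, 0 ≤ M ∧ ∀ t, |f t| ≤ M := by
  obtain ⟨C, hC⟩ :=
    (isCompact_Icc (a := (0:ℝ)) (b := 1)).exists_bound_of_continuousOn hc.continuousOn
  refine ⟨max C 0, le_max_right _ _, fun t => ?_⟩
  have hper : Function.Periodic f 1 := hp
  have h1 : f t = f (Int.fract t) := by
    have := hper.sub_int_mul_eq (x := t) (n := ⌊t⌋)
    rw [mul_one] at this
    rw [← this]
    rfl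
  have hmem : Int.fract t ∈ Set.Icc (0:ℝ) 1 :=
    ⟨Int.fract_nonneg t, (Int.fract_lt_one t).le⟩
  calc |f t| = ‖f (Int.fract t)‖ := by rw [← h1]; rfl
    _ ≤ C := hC _ hmem
    _ ≤ max C 0 := le_max_left _ _

lemma aux_surjective {φ : ℝ → ℝ} (hc : Continuous φ) (hp : ∀ t, φ (t + 1) = φ t + 1) :
    Function.Surjective φ := by
  have hk : ∀ (k : ℕ) (t : ℝ), φ (t + k) = φ t + k := by
    intro k
    induction k with
    | zero => simp
    | succ k ih =>
      intro t
      push_cast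
      rw [← add_assoc, hp (t + k), ih t]
      ring
  intro y
  obtain ⟨N, hN⟩ := exists_nat_ge (|y - φ 0|)
  have h1 : φ (-(N:ℝ)) = φ 0 - N := by
    have := hk N (-(N:ℝ))
    simp at this
    linarith
  have h2 : φ (N:ℝ) = φ 0 + N := by
    have := hk N 0
    simpa using this
  have hy1 : φ (-(N:ℝ)) ≤ y := by
    have := (abs_le.1 hN).1
    rw [h1]; linarith
  have hy2 : y ≤ φ (N:ℝ) := by
    have := (abs_le.1 hN).2
    rw [h2]; linarith
  have hmem : y ∈ Set.Icc (φ (-(N:ℝ))) (φ (N:ℝ)) := ⟨hy1, hy2⟩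
  have := intermediate_value_Icc (by simp : -(N:ℝ) ≤ N) hc.continuousOn hmem
  obtain ⟨z, _, hz⟩ := this
  exact ⟨z, hz⟩

theorem stmt13 (ε : ℝ) (hε : 0 < ε) (n : ℕ) (hn : 1 ≤ n)
    (x : Fin n → ℝ) (hmono : StrictMono x)
    (hlt : ∀ i : Fin n, x i < x ⟨0, hn⟩ + 1) :
    ∃ δ > 0, ∀ y : Fin n → ℝ, (∀ j, |y j - x j| < δ) →
      ∃ φ : ℝ → ℝ, AnalyticOnNhd ℝ φ Set.univ ∧ StrictMono φ ∧
        Function.Bijective φ ∧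
        (∀ t : ℝ, φ (t + 1) = φ t + 1) ∧
        (∀ t : ℝ, |φ t - t| < ε) ∧
        (∀ t : ℝ, |deriv φ t - 1| < ε) ∧
        ∀ j, φ (x j) = y j := by
  classical
  set S : ℝ → ℝ := fun t => Real.sin (Real.pi * t) ^ 2 with hSdef
  -- node differences
  have hdiff : ∀ i j : Fin n, i ≠ j → (x j - x i ≠ 0 ∧ |x j - x i| < 1) := by
    intro i j hij
    have h0i : x ⟨0, hn⟩ ≤ x i := hmono.monotone (by simp [Fin.le_def])
    have h0j : x ⟨0, hn⟩ ≤ x j := hmono.monotone (by simp [Fin.le_def])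
    refine ⟨sub_ne_zero.2 fun h => hij (hmono.injective h.symm), ?_⟩
    rw [abs_sub_lt_iff]
    constructor
    · have := hlt j; linarith
    · have := hlt i; linarith
  have hSne : ∀ i j : Fin n, i ≠ j → S (x j - x i) ≠ 0 := by
    intro i j hij
    exact (aux_S_pos (hdiff i j hij).1 (hdiff i j hij).2).ne'
  set g : Fin n → ℝ → ℝ :=
    fun j t => ∏ i ∈ Finset.univ.erase j, (S (t - x i) / S (x j - x i)) with hgdef
  have hganal : ∀ j, AnalyticOnNhd ℝ (g j) Set.univ := by
    intro j
    apply Finset.analyticOnNhd_fun_prod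
    intro i hi
    have hij : i ≠ j := Finset.ne_of_mem_erase hi
    intro t _
    apply AnalyticAt.div
    · exact (aux_S_analytic _ trivial).comp (analyticAt_id.sub analyticAt_const)
    · exact analyticAt_const
    · exact hSne i j hij
  have hgper : ∀ j t, g j (t + 1) = g j t := by
    intro j t
    apply Finset.prod_congr rfl
    intro i _
    have h1 : t + 1 - x i = (t - x i) + 1 := by ring
    rw [h1]
    have := aux_S_per (t - x i)
    simp only [hSdef]
    rw [this]
  have hgdiff : ∀ j t, DifferentiableAt ℝ (g j) t :=
    fun j t => (hganal j t trivial).differentiableAt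
  have hgderiv_anal : ∀ j, AnalyticOnNhd ℝ (deriv (g j)) Set.univ := fun j => (hganal j).deriv
  have hgd_per : ∀ j t, deriv (g j) (t + 1) = deriv (g j) t := by
    intro j t
    have h1 : deriv (fun s => g j (s + 1)) t = deriv (g j) (t + 1) :=
      deriv_comp_add_const _ _ _
    rw [← h1]
    congr 1
    funext s
    rw [hgper]
  -- bounds
  have hbound : ∀ j, ∃ M : ℝ, 0 ≤ M ∧ ∀ t, |g j t| ≤ M ∧ |deriv (g j) t| ≤ M := by
    intro j
    have hc1 : Continuous (g j) := continuousOn_univ.1 ((hganal j).continuousOn)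
    have hc2 : Continuous (deriv (g j)) :=
      continuousOn_univ.1 ((hgderiv_anal j).continuousOn)
    obtain ⟨M, hM0, hM⟩ := aux_periodic_bound (f := fun t => |g j t| + |deriv (g j) t|)
      (hc1.abs.add hc2.abs) (fun t => by show |g j (t+1)| + |deriv (g j) (t+1)| = |g j t| + |deriv (g j) t|; rw [hgper, hgd_per])
    refine ⟨M, hM0, fun t => ?_⟩
    have h := hM t
    have habs : |(|g j t| + |deriv (g j) t|)| = |g j t| + |deriv (g j) t| :=
      abs_of_nonneg (by positivity)
    rw [habs] at h
    constructor
    · have := abs_nonneg (deriv (g j) t); linarith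
    · have := abs_nonneg (g j t); linarith
  choose M hM0 hM using hbound
  set B : ℝ := ∑ j, M j with hBdef
  have hB0 : 0 ≤ B := Finset.sum_nonneg fun j _ => hM0 j
  have hm : 0 < min ε 1 := lt_min hε one_pos
  set δ : ℝ := min ε 1 / (2 * (B + 1)) with hδdef
  have hδ : 0 < δ := by positivity
  refine ⟨δ, hδ, fun y hy => ?_⟩
  set c : Fin n → ℝ := fun j => y j - x j with hcdef
  have hc : ∀ j, |c j| < δ := hy
  -- generic sum bound
  have hsum : ∀ (v : Fin n → ℝ → ℝ), (∀ j t, |v j t| ≤ M j) →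
      ∀ t, |∑ j, c j * v j t| ≤ δ * B := by
    intro v hv t
    calc |∑ j, c j * v j t| ≤ ∑ j, |c j * v j t| := Finset.abs_sum_le_sum_abs _ _
      _ ≤ ∑ j, δ * M j := by
          apply Finset.sum_le_sum
          intro j _
          rw [abs_mul]
          exact mul_le_mul (hc j).le (hv j t) (abs_nonneg _) hδ.le
      _ = δ * B := by rw [hBdef, Finset.mul_sum]
  have hkey : δ * B < min ε 1 / 2 := by
    have heq : δ * (B + 1) = min ε 1 / 2 := by
      rw [hδdef]
      field_simp
    nlinarith
  set φ : ℝ → ℝ := fun t => t + ∑ j, c j * g j t with hφdef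
  have hφanal : AnalyticOnNhd ℝ φ Set.univ := by
    intro t _
    apply AnalyticAt.add analyticAt_id
    exact Finset.analyticAt_fun_sum _ fun j _ => analyticAt_const.mul (hganal j t trivial)
  have hφcont : Continuous φ := continuousOn_univ.1 hφanal.continuousOn
  have hφper : ∀ t, φ (t + 1) = φ t + 1 := by
    intro t
    simp only [hφdef]
    have : ∀ j, c j * g j (t + 1) = c j * g j t := fun j => by rw [hgper]
    rw [Finset.sum_congr rfl fun j _ => this j]
    ring
  have hsumdiff : ∀ t, DifferentiableAt ℝ (fun s => ∑ j, c j * g j s) t := by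
    intro t
    exact DifferentiableAt.fun_sum fun j _ => (hgdiff j t).const_mul _
  have hφderiv : ∀ t, deriv φ t = 1 + ∑ j, c j * deriv (g j) t := by
    intro t
    rw [hφdef]
    rw [deriv_fun_add differentiableAt_fun_id (hsumdiff t), deriv_id'']
    congr 1
    rw [deriv_fun_sum fun j _ => (hgdiff j t).const_mul _]
    exact Finset.sum_congr rfl fun j _ => deriv_const_mul _ (hgdiff j t)
  have hb1 : ∀ t, |∑ j, c j * g j t| ≤ δ * B := hsum _ fun j t => (hM j t).1
  have hb2 : ∀ t, |∑ j, c j * deriv (g j) t| ≤ δ * B := hsum _ fun j t => (hM j t).2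
  have hderiv_pos : ∀ t, 0 < deriv φ t := by
    intro t
    rw [hφderiv t]
    have h1 := (abs_le.1 (hb2 t)).1
    have h2 : min ε 1 / 2 ≤ 1 / 2 := by
      have := min_le_right ε 1; linarith
    linarith
  have hφmono : StrictMono φ := strictMono_of_deriv_pos hderiv_pos
  refine ⟨φ, hφanal, hφmono, ⟨hφmono.injective, aux_surjective hφcont hφper⟩, hφper, ?_, ?_, ?_⟩
  · intro t
    have h := (hb1 t).trans_lt hkey
    have h2 : min ε 1 / 2 < ε := by
      have := min_le_left ε 1; linarith
    have : φ t - t = ∑ j, c j * g j t := by rw [hφdef]; ring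
    rw [this]
    linarith [(hb1 t).trans_lt hkey]
  · intro t
    rw [hφderiv t]
    have h2 : min ε 1 / 2 < ε := by
      have := min_le_left ε 1; linarith
    have : (1 : ℝ) + ∑ j, c j * deriv (g j) t - 1 = ∑ j, c j * deriv (g j) t := by ring
    rw [this]
    linarith [(hb2 t).trans_lt hkey]
  · intro j
    have hgval1 : g j (x j) = 1 := by
      rw [hgdef]
      apply Finset.prod_eq_one
      intro i hi
      exact div_self (hSne i j (Finset.ne_of_mem_erase hi))
    have hgval0 : ∀ i, i ≠ j → g i (x j) = 0 := by
      intro i hij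
      rw [hgdef]
      apply Finset.prod_eq_zero (Finset.mem_erase.2 ⟨fun h => hij h.symm, Finset.mem_univ j⟩)
      have hS0 : S (x j - x j) = 0 := by simp [hSdef]
      rw [hS0, zero_div]
    have hsumval : ∑ i, c i * g i (x j) = c j := by
      rw [Finset.sum_eq_single j]
      · rw [hgval1, mul_one]
      · intro i _ hij
        rw [hgval0 i hij, mul_zero]
      · intro h
        exact absurd (Finset.mem_univ j) h
    simp only [hφdef]
    rw [hsumval, hcdef]
    ring
end

section
/- Let H be a C^{1+BV} lift of degree d ≥ 2 such that deriv H x ≥ 1 for all x ∈ ℝ and {x ∈ ℝ : deriv H x = 1} = Par(H). Let N be a positive integer, L := (d^N − 1)/(d − 1), and define φ(x) := (1/L) · Σ_{k=0}^{N−1} H^[k](x). Then: (i) φ(x+1) = φ(x) + 1 for all x, and φ is a continuously differentiable strictly increasing bijection of ℝ with deriv φ x > 0 everywhere; (ii) the conjugate Ĥ := φ ∘ H ∘ φ⁻¹ satisfies, for all x ∈ ℝ, deriv Ĥ (φ(x)) = (Σ_{k=1}^{N} deriv (H^[k]) x) / (Σ_{k=0}^{N−1} deriv (H^[k]) x) ≥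 1, with equality if and only if x ∈ Par(H). -/
open Function Set Filter Asymptotics

section Aux
variable {d : ℤ} {H : ℝ → ℝ}

lemma one_le_prodR (s : Finset ℕ) (f : ℕ → ℝ) (h : ∀ i ∈ s, 1 ≤ f i) :
    1 ≤ ∏ i ∈ s, f i := by
  calc (1:ℝ) = ∏ _i ∈ s, 1 := by simp
  _ ≤ ∏ i ∈ s, f i := Finset.prod_le_prod (by norm_num) h

lemma factors_eq_one (s : Finset ℕ) (f : ℕ → ℝ) (h1 : ∀ i ∈ s, 1 ≤ f i)
    (hp : ∏ i ∈ s, f i = 1) : ∀ i ∈ s, f i = 1 := by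
  intro i hi
  have hrest : 1 ≤ ∏ j ∈ s.erase i, f j :=
    one_le_prodR _ _ fun j hj => h1 j (Finset.mem_of_mem_erase hj)
  have hsplit := Finset.mul_prod_erase s f hi
  have hfi := h1 i hi
  nlinarith [hsplit, hp]

lemma lift_hasDerivAt (hH : IsLift d H) (x : ℝ) : HasDerivAt H (deriv H x) x :=
  (hH.1.differentiable one_ne_zero x).hasDerivAt

lemma iter_hasDerivAt (hH : IsLift d H) (k : ℕ) (x : ℝ) :
    HasDerivAt (H^[k]) (∏ j ∈ Finset.range k, deriv H (H^[j] x)) x := by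
  induction k with
  | zero => simpa using hasDerivAt_id x
  | succ k ih =>
      rw [Function.iterate_succ']
      have := (lift_hasDerivAt hH (H^[k] x)).comp x ih
      rw [Finset.prod_range_succ]
      simpa [mul_comm] using this

lemma deriv_iter (hH : IsLift d H) (k : ℕ) (x : ℝ) :
    deriv (H^[k]) x = ∏ j ∈ Finset.range k, deriv H (H^[j] x) :=
  (iter_hasDerivAt hH k x).deriv

lemma one_le_deriv_iter (hH : IsLift d H) (hge : ∀ x, 1 ≤ deriv H x) (k : ℕ) (x : ℝ) :
    1 ≤ deriv (H^[k]) x := by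
  rw [deriv_iter hH]
  exact one_le_prodR _ _ fun j _ => hge _

lemma iter_contDiff (hH : IsLift d H) (k : ℕ) : ContDiff ℝ 1 (H^[k]) := by
  induction k with
  | zero => simpa using contDiff_id
  | succ k ih => rw [Function.iterate_succ']; exact hH.1.comp ih

lemma H_add_int (hH : IsLift d H) (y : ℝ) (m : ℤ) : H (y + m) = H y + d * m := by
  induction m using Int.induction_on with
  | zero => simp
  | succ n ih =>
      have h1 := hH.2.2.1 (y + n)
      push_cast at ih h1 ⊢
      ring_nf at ih h1 ⊢
      linarith [ih, h1]
  | pred n ih =>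
      have h1 := hH.2.2.1 (y + (-(n : ℝ) - 1))
      push_cast at ih ⊢
      ring_nf at ih h1 ⊢
      linarith [ih, h1]

lemma derivH_add_int (hH : IsLift d H) (y : ℝ) (m : ℤ) :
    deriv H (y + m) = deriv H y := by
  have h1 : (fun z => H (z + (m : ℝ))) = fun z => H z + d * m :=
    funext fun z => H_add_int hH z m
  have h2 := deriv_comp_add_const H (m : ℝ) y
  rw [h1] at h2
  simpa using h2.symm

lemma iter_add_int (hH : IsLift d H) (k : ℕ) (x : ℝ) (m : ℤ) :
    H^[k] (x + m) = H^[k] x + (d ^ k * m : ℤ) := by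
  induction k with
  | zero => simp
  | succ k ih =>
      rw [Function.iterate_succ_apply', Function.iterate_succ_apply', ih,
        H_add_int hH]
      push_cast; ring

lemma par_step (hH : IsLift d H) (hge : ∀ x, 1 ≤ deriv H x)
    (hpar : {x : ℝ | deriv H x = 1} = Par H) {x : ℝ} (hx : x ∈ Par H) :
    H x ∈ Par H := by
  obtain ⟨s, ⟨hs1, m, hm⟩, hmul⟩ := hx
  have hfac : ∀ j ∈ Finset.range s, deriv H (H^[j] x) = 1 := by
    refine factors_eq_one _ _ (fun j _ => hge _) ?_
    rw [← deriv_iter hH]; exact hmul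
  have hmx : H^[s] x = x + m := by linarith [hm]
  refine ⟨s, ⟨hs1, d * m, ?_⟩, ?_⟩
  · rw [← Function.iterate_succ_apply, Function.iterate_succ_apply', hmx,
      H_add_int hH]
    push_cast; ring
  · rw [deriv_iter hH]
    apply Finset.prod_eq_one
    intro j hj
    rw [← Function.iterate_succ_apply]
    rcases lt_or_eq_of_le (Nat.succ_le_of_lt (Finset.mem_range.mp hj)) with h | h
    · exact hfac _ (Finset.mem_range.mpr h)
    · rw [h, hmx, derivH_add_int hH]
      exact hfac 0 (Finset.mem_range.mpr hs1)

lemma par_iter (hH : IsLift d H) (hge : ∀ x, 1 ≤ deriv H x)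
    (hpar : {x : ℝ | deriv H x = 1} = Par H) {x : ℝ} (hx : x ∈ Par H) (j : ℕ) :
    H^[j] x ∈ Par H := by
  induction j with
  | zero => simpa using hx
  | succ j ih => rw [Function.iterate_succ_apply']; exact par_step hH hge hpar ih

lemma derivN_eq_one_iff (hH : IsLift d H) (hge : ∀ x, 1 ≤ deriv H x)
    (hpar : {x : ℝ | deriv H x = 1} = Par H) {N : ℕ} (hN : 0 < N) (x : ℝ) :
    deriv (H^[N]) x = 1 ↔ x ∈ Par H := by
  constructor
  · intro h
    have hfac : ∀ j ∈ Finset.range N, deriv H (H^[j] x) = 1 := by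
      refine factors_eq_one _ _ (fun j _ => hge _) ?_
      rw [← deriv_iter hH]; exact h
    have h0 : deriv H x = 1 := by simpa using hfac 0 (Finset.mem_range.mpr hN)
    rw [← hpar]; exact h0
  · intro hx
    rw [deriv_iter hH]
    apply Finset.prod_eq_one
    intro j _
    have := par_iter hH hge hpar hx j
    rw [← hpar] at this
    exact this

lemma deriv_iter_succ (hH : IsLift d H) (k : ℕ) (x : ℝ) :
    deriv (H^[k + 1]) x = deriv (H^[k]) (H x) * deriv H x := by
  rw [deriv_iter hH, deriv_iter hH, Finset.prod_range_succ']
  simp [Function.iterate_succ_apply]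


end Aux

theorem stmt16 (d : ℤ) (hd : 2 ≤ d) (H : ℝ → ℝ) (hH : IsLift d H)
    (hge : ∀ x, 1 ≤ deriv H x) (hpar : {x : ℝ | deriv H x = 1} = Par H)
    (N : ℕ) (hN : 0 < N) (L : ℝ) (hL : L = ((d : ℝ) ^ N - 1) / ((d : ℝ) - 1))
    (φ : ℝ → ℝ) (hφ : ∀ x, φ x = (1 / L) * ∑ k ∈ Finset.range N, H^[k] x) :
    (∀ x, φ (x + 1) = φ x + 1) ∧
    ContDiff ℝ 1 φ ∧ StrictMono φ ∧ Function.Bijective φ ∧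
    (∀ x, 0 < deriv φ x) ∧
    (∀ x, deriv (φ ∘ H ∘ Function.invFun φ) (φ x) =
      (∑ k ∈ Finset.Icc 1 N, deriv (H^[k]) x) /
        (∑ k ∈ Finset.range N, deriv (H^[k]) x)) ∧
    (∀ x, 1 ≤ deriv (φ ∘ H ∘ Function.invFun φ) (φ x)) ∧
    (∀ x, deriv (φ ∘ H ∘ Function.invFun φ) (φ x) = 1 ↔ x ∈ Par H) := by
  have hφe : φ = fun x => (1 / L) * ∑ k ∈ Finset.range N, H^[k] x := funext hφ
  have hd2 : (2 : ℝ) ≤ (d : ℝ) := by exact_mod_cast hd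
  have hdn1 : (1 : ℝ) < (d : ℝ) ^ N := one_lt_pow₀ (by linarith) hN.ne'
  have hLpos : 0 < L := by rw [hL]; apply div_pos <;> linarith
  have hLne : L ≠ 0 := ne_of_gt hLpos
  set S0 : ℝ → ℝ := fun x => ∑ k ∈ Finset.range N, deriv (H^[k]) x with hS0def
  have hS0ge : ∀ x, 1 ≤ S0 x := by
    intro x
    have h1 : ∑ k ∈ Finset.range N, (1 : ℝ) ≤ S0 x :=
      Finset.sum_le_sum fun k _ => one_le_deriv_iter hH hge k x
    have h2 : (1 : ℝ) ≤ N := by exact_mod_cast hN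
    simp only [Finset.sum_const, Finset.card_range, nsmul_eq_mul, mul_one] at h1
    linarith
  have hS0pos : ∀ x, 0 < S0 x := fun x => lt_of_lt_of_le one_pos (hS0ge x)
  have hderivφ : ∀ x, HasDerivAt φ ((1 / L) * S0 x) x := by
    intro x
    have hs : HasDerivAt (fun x => ∑ k ∈ Finset.range N, H^[k] x) (S0 x) x :=
      HasDerivAt.fun_sum fun k _ => ((iter_contDiff hH k).differentiable one_ne_zero x).hasDerivAt
    rw [hφe]
    exact hs.const_mul (1 / L)
  have hderivφval : ∀ x, deriv φ x = (1 / L) * S0 x := fun x => (hderivφ x).deriv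
  have hderivφpos : ∀ x, 0 < deriv φ x := by
    intro x; rw [hderivφval]
    exact mul_pos (by positivity) (hS0pos x)
  have hiter_geom : ∀ (x : ℝ) (m : ℤ),
      (∑ k ∈ Finset.range N, H^[k] (x + m)) = (∑ k ∈ Finset.range N, H^[k] x) + L * m := by
    intro x m
    have h : ∀ k ∈ Finset.range N, H^[k] (x + m) = H^[k] x + (d : ℝ) ^ k * m := by
      intro k _
      have := iter_add_int hH k x m
      push_cast at this
      exact this
    rw [Finset.sum_congr rfl h, Finset.sum_add_distrib, ← Finset.sum_mul,
      geom_sum_eq (by linarith : (d : ℝ) ≠ 1) N, ← hL]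
  have hφ_add : ∀ (x : ℝ) (m : ℤ), φ (x + m) = φ x + m := by
    intro x m
    rw [hφe]
    simp only
    rw [hiter_geom x m]
    field_simp
  have hφ_add_one : ∀ x, φ (x + 1) = φ x + 1 := by
    intro x
    have := hφ_add x 1
    push_cast at this
    exact this
  have hφCD : ContDiff ℝ 1 φ := by
    rw [hφe]
    exact contDiff_const.mul (ContDiff.sum fun k _ => iter_contDiff hH k)
  have hmono : StrictMono φ := strictMono_of_deriv_pos hderivφpos
  have hsurj : Function.Surjective φ := by
    intro y
    set a : ℤ := ⌈y - φ 0⌉ with ha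
    set b : ℤ := ⌊y - φ 0⌋ with hb
    have h1 : φ ((0 : ℝ) + (b : ℤ)) ≤ y := by
      rw [hφ_add]
      have : (b : ℝ) ≤ y - φ 0 := Int.floor_le _
      linarith
    have h2 : y ≤ φ ((0 : ℝ) + (a : ℤ)) := by
      rw [hφ_add]
      have : (y : ℝ) - φ 0 ≤ a := Int.le_ceil _
      linarith
    have hmle : ((0 : ℝ) + (b : ℤ)) ≤ ((0 : ℝ) + (a : ℤ)) := by
      have h : (b : ℝ) ≤ (a : ℝ) := by exact_mod_cast (Int.floor_le_ceil (y - φ 0))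
      linarith
    have hc : ContinuousOn φ (Set.Icc ((0 : ℝ) + (b : ℤ)) ((0 : ℝ) + (a : ℤ))) :=
      hφCD.continuous.continuousOn
    have hIVT := intermediate_value_Icc hmle hc
    obtain ⟨x, _, hx⟩ := hIVT ⟨h1, h2⟩
    exact ⟨x, hx⟩
  have hbij : Function.Bijective φ := ⟨hmono.injective, hsurj⟩
  -- inverse function
  have hcontinv : Continuous (Function.invFun φ) := by
    set e := StrictMono.orderIsoOfSurjective φ hmono hsurj with he
    have hinvfun : Function.invFun φ = ⇑e.symm := by
      funext y
      apply hmono.injective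
      rw [Function.invFun_eq (hsurj y)]
      have h1 : φ (e.symm y) = e (e.symm y) := rfl
      rw [h1, e.apply_symm_apply]
    rw [hinvfun]
    exact OrderIso.continuous e.symm
  have hga : ∀ x, Function.invFun φ (φ x) = x :=
    fun x => Function.leftInverse_invFun hmono.injective x
  -- shift identity for the sums
  have hshift : ∀ x : ℝ, ∑ k ∈ Finset.Icc 1 N, deriv (H^[k]) x
      = ∑ k ∈ Finset.range N, deriv (H^[k + 1]) x := by
    intro x
    rw [← Finset.Ico_add_one_right_eq_Icc, Finset.sum_Ico_eq_sum_range]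
    norm_num
    exact Finset.sum_congr rfl fun k _ => by rw [add_comm 1 k, Function.iterate_succ]
  have hS1 : ∀ x : ℝ, ∑ k ∈ Finset.Icc 1 N, deriv (H^[k]) x = S0 (H x) * deriv H x := by
    intro x
    rw [hshift, hS0def, Finset.sum_mul]
    exact Finset.sum_congr rfl fun k _ => deriv_iter_succ hH k x
  have hS1' : ∀ x : ℝ, ∑ k ∈ Finset.Icc 1 N, deriv (H^[k]) x
      = S0 x + deriv (H^[N]) x - 1 := by
    intro x
    have h0 : deriv (H^[0]) x = 1 := by simp [deriv_iter hH]
    have ha := Finset.sum_range_succ' (fun k => deriv (H^[k]) x) N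
    have hb := Finset.sum_range_succ (fun k => deriv (H^[k]) x) N
    rw [hshift]
    rw [h0] at ha
    rw [hb] at ha
    linarith
  -- derivative of the conjugate
  have hkey : ∀ x, deriv (φ ∘ H ∘ Function.invFun φ) (φ x)
      = (∑ k ∈ Finset.Icc 1 N, deriv (H^[k]) x) / S0 x := by
    intro x
    have hne : (1 / L) * S0 (Function.invFun φ (φ x)) ≠ 0 := by
      rw [hga]
      exact ne_of_gt (mul_pos (by positivity) (hS0pos x))
    have hinv : HasDerivAt (Function.invFun φ)
        (((1 / L) * S0 (Function.invFun φ (φ x)))⁻¹) (φ x) :=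
      HasDerivAt.of_local_left_inverse hcontinv.continuousAt (hderivφ _) hne
        (Filter.Eventually.of_forall fun y => Function.invFun_eq (hsurj y))
    rw [hga] at hinv
    have hφH : HasDerivAt (φ ∘ H)
        (((1 / L) * S0 (H (Function.invFun φ (φ x)))) * deriv H (Function.invFun φ (φ x)))
        (Function.invFun φ (φ x)) :=
      (hderivφ _).comp _ (lift_hasDerivAt hH _)
    have hG : HasDerivAt (φ ∘ H ∘ Function.invFun φ)
        ((((1 / L) * S0 (H (Function.invFun φ (φ x)))) * deriv H (Function.invFun φ (φ x)))
          * ((1 / L) * S0 x)⁻¹) (φ x) := hφH.comp (φ x) hinv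
    rw [hga] at hG
    rw [hG.deriv, hS1 x]
    have hS0ne : S0 x ≠ 0 := ne_of_gt (hS0pos x)
    field_simp
  refine ⟨hφ_add_one, hφCD, hmono, hbij, hderivφpos, fun x => hkey x, ?_, ?_⟩
  · intro x
    rw [hkey x]
    rw [one_le_div (hS0pos x), hS1' x]
    have := one_le_deriv_iter hH hge N x
    linarith
  · intro x
    rw [hkey x, div_eq_one_iff_eq (ne_of_gt (hS0pos x)), hS1' x,
      ← derivN_eq_one_iff hH hge hpar hN x]
    constructor <;> intro h <;> linarith
end

section
/- Let d ≥ 2 be an integer, r := (d − 1)/(d + 1), and define the complex maps M_r(z) := (z + r)/(1 + r·z), h_d(z) := (z^d + r)/(r·z^d + 1), and g(z) := (M_r(z))^d. Then: (i) for every z ∈ ℂ with |z| = 1 one has |M_r(z)| = 1 and |g(z)| = 1; (ii) for every z ∈ ℂ with 1 + r·z ≠ 0 and 1 + r·z^d ≠ 0 one has h_d(M_r(z)) = M_r(g(z)), i.e. g = M_r⁻¹ ∘ h_d ∘ M_r; (iii) g(1) = 1 and the complex derivative of g at 1 equals 1; and (iv) for every z with |z| = 1 and z ≠ 1, the modulus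 of the complex derivative of g at z is strictly greater than 1 (so g restricted to the unit circle is metrically expanding with unique parabolic point 1). -/
open Function Set Filter Asymptotics

set_option maxHeartbeats 1000000 in
theorem stmt17 (d : ℕ) (hd : 2 ≤ d) (r : ℝ) (hr : r = ((d : ℝ) - 1) / ((d : ℝ) + 1))
    (Mr hd' g : ℂ → ℂ)
    (hMr : ∀ z : ℂ, Mr z = (z + (r : ℂ)) / (1 + (r : ℂ) * z))
    (hhd : ∀ z : ℂ, hd' z = (z ^ d + (r : ℂ)) / ((r : ℂ) * z ^ d + 1))
    (hg : ∀ z : ℂ, g z = (Mr z) ^ d) :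
    (∀ z : ℂ, ‖z‖ = 1 → ‖Mr z‖ = 1 ∧ ‖g z‖ = 1) ∧
    (∀ z : ℂ, 1 + (r : ℂ) * z ≠ 0 → 1 + (r : ℂ) * z ^ d ≠ 0 →
      hd' (Mr z) = Mr (g z)) ∧
    (g 1 = 1 ∧ deriv g 1 = 1) ∧
    (∀ z : ℂ, ‖z‖ = 1 → z ≠ 1 → 1 < ‖deriv g z‖) := by
  have hd2 : (2:ℝ) ≤ (d:ℝ) := by exact_mod_cast hd
  have hdpos : (0:ℝ) < (d:ℝ) + 1 := by linarith
  have hr0 : 0 < r := by rw [hr]; apply div_pos <;> linarith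
  have hr1 : r < 1 := by rw [hr, div_lt_one hdpos]; linarith
  set c : ℂ := (r : ℂ) with hc
  have habs_c : ‖c‖ = r := by
    simp [hc, abs_of_pos hr0]
  have hden : ∀ z : ℂ, ‖z‖ = 1 → (1 + c * z) ≠ 0 := by
    intro z hz h
    have h1 : c * z = -1 := by linear_combination h
    have h2 : ‖c * z‖ = 1 := by rw [h1]; simp
    rw [norm_mul, habs_c, hz, mul_one] at h2
    linarith
  have hMabs : ∀ z : ℂ, ‖z‖ = 1 → ‖Mr z‖ = 1 := by
    intro z hz
    have hzz : z * (starRingEnd ℂ) z = 1 := by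
      rw [Complex.mul_conj]
      norm_cast
      rw [← Complex.sq_norm, hz]; norm_num
    have key : z + c = z * (starRingEnd ℂ) (1 + c * z) := by
      rw [map_add, map_mul, map_one, Complex.conj_ofReal]
      calc z + c = z + c * (z * (starRingEnd ℂ) z) := by rw [hzz, mul_one]
        _ = z * (1 + (r:ℂ) * (starRingEnd ℂ) z) := by ring
    rw [hMr, norm_div, key, norm_mul, Complex.norm_conj, hz, one_mul, div_self]
    exact norm_ne_zero_iff.mpr (hden z hz)
  have hgfun : g = fun w => ((w + c) / (1 + c * w)) ^ d := by
    funext w; rw [hg, hMr]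
  have hder : ∀ z : ℂ, (1 + c * z) ≠ 0 →
      HasDerivAt g ((d:ℂ) * ((z + c) / (1 + c * z)) ^ (d - 1) *
        ((1 - c ^ 2) / (1 + c * z) ^ 2)) z := by
    intro z hz
    have h1 : HasDerivAt (fun w : ℂ => w + c) 1 z := (hasDerivAt_id z).add_const c
    have h2 : HasDerivAt (fun w : ℂ => 1 + c * w) c z := by
      simpa using ((hasDerivAt_id z).const_mul c).const_add 1
    have h3 := (h1.fun_div h2 hz).fun_pow d
    rw [hgfun]
    convert h3 using 2
    · rfl
    congr 1
    ring
  have hval : (d:ℝ) * (1 - r ^ 2) = (1 + r) ^ 2 := by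
    rw [hr]
    have h1 : (d:ℝ) + 1 ≠ 0 := by linarith
    field_simp
    ring
  have hvalC : (d:ℂ) * (1 - c ^ 2) = (1 + c) ^ 2 := by
    rw [hc]; exact_mod_cast congrArg (Complex.ofReal) hval
  have hc1 : (1:ℂ) + c ≠ 0 := by
    intro h
    have : ((1 + r : ℝ) : ℂ) = 0 := by push_cast; linear_combination h
    have := Complex.ofReal_eq_zero.mp this
    linarith
  refine ⟨?_, ?_, ⟨?_, ?_⟩, ?_⟩
  · intro z hz
    exact ⟨hMabs z hz, by rw [hg, norm_pow, hMabs z hz, one_pow]⟩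
  · intro z h1 h2
    rw [hhd, hMr (g z), hg, add_comm (c * Mr z ^ d) 1]
  · rw [hg, hMr]
    rw [mul_one, div_self hc1, one_pow]
  · have h := hder 1 (by simpa using hc1)
    rw [h.deriv, mul_one, div_self hc1, one_pow, mul_one, ← mul_div_assoc,
      div_eq_one_iff_eq (pow_ne_zero 2 hc1)]
    exact hvalC
  · intro z hz hz1
    have hdz := hder z (hden z hz)
    have hMz : ‖(z + c) / (1 + c * z)‖ = 1 := by
      have := hMabs z hz; rwa [hMr] at this
    have habs1 : ‖1 - c ^ 2‖ = 1 - r ^ 2 := by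
      have : (1:ℂ) - c ^ 2 = ((1 - r ^ 2 : ℝ) : ℂ) := by push_cast; ring
      rw [this, Complex.norm_real, Real.norm_eq_abs, abs_of_pos]; nlinarith
    have hre : z.re < 1 := by
      rcases lt_or_eq_of_le (Complex.re_le_norm z) with h | h
      · rwa [hz] at h
      · exfalso
        have hre1 : z.re = 1 := by rw [h, hz]
        have hsq : z.re ^ 2 + z.im ^ 2 = 1 := by
          have := Complex.sq_norm z
          rw [hz, Complex.normSq_apply] at this
          nlinarith [this]
        have him : z.im = 0 := by nlinarith
        apply hz1
        apply Complex.ext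
        · rw [hre1]; simp
        · simp [him]
    have hnsq : ‖1 + c * z‖ ^ 2 = 1 + 2 * r * z.re + r ^ 2 := by
      rw [Complex.sq_norm, Complex.normSq_apply]
      simp only [Complex.add_re, Complex.add_im, Complex.one_re, Complex.one_im,
        Complex.mul_re, Complex.mul_im, hc, Complex.ofReal_re, Complex.ofReal_im]
      have hsq : z.re * z.re + z.im * z.im = 1 := by
        have := Complex.sq_norm z
        rw [hz, Complex.normSq_apply] at this
        nlinarith [this]
      nlinarith [hsq]
    have hlt : ‖1 + c * z‖ ^ 2 < (d:ℝ) * (1 - r ^ 2) := by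
      have h1 : 2 * r * z.re < 2 * r := by nlinarith
      have h2 : (1 + r) ^ 2 = 1 + 2 * r + r ^ 2 := by ring
      rw [hval, hnsq, h2]
      linarith
    have hpos : 0 < ‖1 + c * z‖ ^ 2 := by
      have := norm_pos_iff.mpr (hden z hz); positivity
    rw [hdz.deriv, norm_mul, norm_mul, norm_pow, hMz, one_pow, mul_one,
      norm_div, norm_pow, habs1, Complex.norm_natCast, ← mul_div_assoc]
    exact (one_lt_div hpos).mpr hlt
end
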